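/- For every sampling interval δ > 0 and every k = 1, 2, ..., the second difference leb(A_{(k+1)δ} \ A) − 2·leb(A_{kδ} \ A) + leb(A_{(k−1)δ} \ A) is ≤ 0, and is < 0 if d is strictly increasing. Consequently, whenever bδ + 2·leb(A_δ \ A) > 0, the ratio ρ_k(δ) := (leb(A_{(k+1)δ} \ A) − 2·leb(A_{kδ} \ A) + leb(A_{(k−1)δ} \ A)) / (bδ + 2·leb(A_δ \ A)) satisfies ρ_k(δ) ≤ 0, with strict inequality if d is strictly increasing. -/

import Mathlib

open MeasureTheory Set Filter

/-- Volume of the trawl increment as an integral, for a globally monotone `e`. -/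
lemma vol_diff_eq (b t : ℝ) (e : ℝ → ℝ) (he : Monotone e)
    (hrange : ∀ u, b ≤ e u) (ht : 0 ≤ t) :
    (volume ({p : ℝ × ℝ | p.2 ≤ t ∧ b ≤ p.1 ∧ p.1 < e (p.2 - t)} \
      {p : ℝ × ℝ | p.2 ≤ 0 ∧ b ≤ p.1 ∧ p.1 < e p.2})).toReal
      = ∫ u in (-t)..(0:ℝ), (e u - b) := by
  have hmeas : Measurable e := he.measurable
  set S : Set (ℝ × ℝ) := (Ioc 0 t ×ˢ Ici b) ∩ {p : ℝ × ℝ | p.2 < e (p.1 - t)} with hSdef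
  have hset : {p : ℝ × ℝ | p.2 ≤ t ∧ b ≤ p.1 ∧ p.1 < e (p.2 - t)} \
      {p : ℝ × ℝ | p.2 ≤ 0 ∧ b ≤ p.1 ∧ p.1 < e p.2} = Prod.swap ⁻¹' S := by
    ext p
    simp only [hSdef, mem_diff, mem_setOf_eq, mem_preimage, Prod.fst_swap, Prod.snd_swap,
      mem_inter_iff, mem_prod, mem_Ioc, mem_Ici]
    constructor
    · rintro ⟨⟨h1, h2, h3⟩, h4⟩
      refine ⟨⟨⟨?_, h1⟩, h2⟩, h3⟩
      by_contra h
      push_neg at h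
      exact h4 ⟨h, h2, h3.trans_le (he (by linarith))⟩
    · rintro ⟨⟨⟨h0, h1⟩, h2⟩, h3⟩
      exact ⟨⟨h1, h2, h3⟩, fun h => absurd h.1 (not_le.2 h0)⟩
  have hSmeas : MeasurableSet S :=
    (measurableSet_Ioc.prod measurableSet_Ici).inter
      (measurableSet_lt measurable_snd (hmeas.comp (measurable_fst.sub measurable_const)))
  have hswap : volume (Prod.swap ⁻¹' S) = volume S := by
    rw [Measure.volume_eq_prod]
    exact Measure.measurePreserving_swap.measure_preimage hSmeas.nullMeasurableSet
  -- relate S to a regionBetween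
  set RB : Set (ℝ × ℝ) := regionBetween (fun _ => b) (fun x => e (x - t)) (Ioc 0 t) with hRB
  have hsub1 : RB ⊆ S := by
    rintro p ⟨hp1, hp2⟩
    exact ⟨⟨hp1, le_of_lt hp2.1⟩, hp2.2⟩
  have hsub2 : S ⊆ RB ∪ (univ ×ˢ {b} : Set (ℝ × ℝ)) := by
    rintro p ⟨⟨hp1, hp2⟩, hp3⟩
    rcases eq_or_lt_of_le (mem_Ici.mp hp2 : b ≤ p.2) with h | h
    · exact Or.inr ⟨trivial, h.symm⟩
    · exact Or.inl ⟨hp1, h, hp3⟩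
  have hnull : volume ((univ ×ˢ {b} : Set (ℝ × ℝ))) = 0 := by
    rw [Measure.volume_eq_prod, Measure.prod_prod]
    simp
  have hvolS : volume S = volume RB := by
    refine le_antisymm ?_ (measure_mono hsub1)
    calc volume S ≤ volume (RB ∪ (univ ×ˢ {b} : Set (ℝ × ℝ))) := measure_mono hsub2
      _ ≤ volume RB + volume ((univ ×ˢ {b} : Set (ℝ × ℝ))) := measure_union_le _ _
      _ = volume RB := by rw [hnull, add_zero]
  have hf_int : IntegrableOn (fun _ : ℝ => b) (Ioc 0 t) volume :=
    integrableOn_const measure_Ioc_lt_top.ne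
  have hg_int : IntegrableOn (fun x => e (x - t)) (Ioc 0 t) volume := by
    have hm : MonotoneOn (fun x => e (x - t)) (Icc 0 t) :=
      fun x _ y _ hxy => he (by linarith)
    exact (hm.integrableOn_isCompact isCompact_Icc).mono_set Ioc_subset_Icc_self
  have hvolRB : volume RB = ENNReal.ofReal (∫ y in Ioc 0 t, (e (y - t) - b)) := by
    rw [hRB, Measure.volume_eq_prod]
    have := volume_regionBetween_eq_integral (μ := volume) hf_int hg_int measurableSet_Ioc
      (fun x _ => hrange (x - t))
    simpa using this
  rw [hset, hswap, hvolS, hvolRB, ENNReal.toReal_ofReal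
    (setIntegral_nonneg measurableSet_Ioc (fun x _ => sub_nonneg.2 (hrange _)))]
  rw [← intervalIntegral.integral_of_le ht]
  have h2 := intervalIntegral.integral_comp_sub_right (a := (0:ℝ)) (b := t)
    (fun u => e u - b) t
  simp only [zero_sub, sub_self] at h2
  exact h2

/-- For every sampling interval `δ > 0` and every `k = 1, 2, ...`, the
second difference `leb(A_{(k+1)δ} \ A) − 2 leb(A_{kδ} \ A) + leb(A_{(k−1)δ} \ A)` is `≤ 0`,
and `< 0` if `d` is strictly increasing.  Consequently, whenever `bδ + 2 leb(A_δ \ A) > 0`,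
the autocorrelation `ρ_k(δ)` of price changes is `≤ 0`, with strict inequality if `d` is
strictly increasing. -/
theorem trawl_second_difference_nonpos
    (b : ℝ) (hb : b ∈ Set.Icc (0:ℝ) 1)
    (d : ℝ → ℝ)
    (hd_cont : ContinuousOn d (Set.Iic 0))
    (hd_mono : MonotoneOn d (Set.Iic 0))
    (hd_range : ∀ s ≤ (0:ℝ), d s ∈ Set.Icc b 1)
    (hd0 : d 0 = 1)
    (hd_lim : Filter.Tendsto d Filter.atBot (nhds b))
    (hd_int : MeasureTheory.IntegrableOn (fun s => d s - b) (Set.Iic 0))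
    (A : ℝ → Set (ℝ × ℝ))
    (hA : ∀ t, A t = {p : ℝ × ℝ | p.2 ≤ t ∧ b ≤ p.1 ∧ p.1 < d (p.2 - t)})
    (F : ℝ → ℝ)
    (hF : ∀ t, F t = (volume (A t \ A 0)).toReal) :
    ∀ δ > (0:ℝ), ∀ k : ℕ, 1 ≤ k →
      (F (((k:ℝ)+1)*δ) - 2 * F ((k:ℝ)*δ) + F (((k:ℝ)-1)*δ) ≤ 0) ∧
      (StrictMonoOn d (Set.Iic 0) →
        F (((k:ℝ)+1)*δ) - 2 * F ((k:ℝ)*δ) + F (((k:ℝ)-1)*δ) < 0) ∧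
      (b * δ + 2 * F δ > 0 →
        (F (((k:ℝ)+1)*δ) - 2 * F ((k:ℝ)*δ) + F (((k:ℝ)-1)*δ)) / (b * δ + 2 * F δ) ≤ 0 ∧
        (StrictMonoOn d (Set.Iic 0) →
          (F (((k:ℝ)+1)*δ) - 2 * F ((k:ℝ)*δ) + F (((k:ℝ)-1)*δ)) / (b * δ + 2 * F δ) < 0)) := by
  -- extend `d` monotonically to all of ℝ
  set e : ℝ → ℝ := fun u => d (min u 0) with he_def
  have he_mono : Monotone e :=
    fun u v h => hd_mono (min_le_right u 0) (min_le_right v 0) (min_le_min h le_rfl)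
  have he_range : ∀ u, b ≤ e u := fun u => (hd_range _ (min_le_right u 0)).1
  have he_eq : ∀ u ≤ (0:ℝ), e u = d u := fun u hu => by
    simp only [he_def, min_eq_left hu]
  -- `F t` as an integral
  have hF' : ∀ t, 0 ≤ t → F t = ∫ u in (-t)..(0:ℝ), (d u - b) := by
    intro t ht
    have hAe : ∀ s, A s = {p : ℝ × ℝ | p.2 ≤ s ∧ b ≤ p.1 ∧ p.1 < e (p.2 - s)} := by
      intro s
      rw [hA]
      ext p
      simp only [mem_setOf_eq]
      constructor
      · rintro ⟨h1, h2, h3⟩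
        exact ⟨h1, h2, by rwa [he_eq _ (by linarith)]⟩
      · rintro ⟨h1, h2, h3⟩
        exact ⟨h1, h2, by rwa [he_eq _ (by linarith)] at h3⟩
    have hA0 : A 0 = {p : ℝ × ℝ | p.2 ≤ 0 ∧ b ≤ p.1 ∧ p.1 < e p.2} := by
      rw [hAe 0]; simp
    have := vol_diff_eq b t e he_mono he_range ht
    rw [hF, hAe t, hA0, this]
    refine intervalIntegral.integral_congr (fun u hu => ?_)
    rw [uIcc_of_le (by linarith : -t ≤ (0:ℝ))] at hu
    rw [he_eq u hu.2]
  intro δ hδ k hk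
  have hk1 : (1:ℝ) ≤ (k:ℝ) := by exact_mod_cast hk
  -- interval integrability of shifted integrands
  have hii : ∀ (c a v : ℝ), 0 ≤ c → a ≤ v → v + c ≤ 0 →
      IntervalIntegrable (fun u => d (u + c) - b) volume a v := by
    intro c a v hc hav hv0
    have hm : MonotoneOn (fun u => d (u + c) - b) (Icc a v) := by
      intro x hx y hy hxy
      exact sub_le_sub_right
        (hd_mono (show x + c ∈ Iic 0 by simp only [mem_Iic]; linarith [hx.2])
          (show y + c ∈ Iic 0 by simp only [mem_Iic]; linarith [hy.2]) (by linarith)) b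
    have : IntegrableOn (fun u => d (u + c) - b) (uIcc a v) volume := by
      rw [uIcc_of_le hav]
      exact hm.integrableOn_isCompact isCompact_Icc
    exact this.intervalIntegrable
  have hii0 : ∀ (a v : ℝ), a ≤ v → v ≤ 0 →
      IntervalIntegrable (fun u => d u - b) volume a v := by
    intro a v hav hv0
    have := hii 0 a v le_rfl hav (by linarith)
    simpa using this
  -- nonnegativity of the relevant points
  set t1 : ℝ := ((k:ℝ)+1)*δ
  set t2 : ℝ := (k:ℝ)*δ
  set t3 : ℝ := ((k:ℝ)-1)*δ
  have ht1 : 0 ≤ t1 := by positivity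
  have ht2 : 0 ≤ t2 := by positivity
  have ht3 : 0 ≤ t3 := mul_nonneg (by linarith) hδ.le
  have hord1 : -t1 ≤ -t2 := by simp only [t1, t2, neg_le_neg_iff]; nlinarith
  have hord2 : -t2 ≤ -t3 := by simp only [t2, t3, neg_le_neg_iff]; nlinarith
  have hord3 : -t3 ≤ 0 := by linarith
  -- split the integrals
  have e1 : F t1 = (∫ u in (-t1)..(-t2), (d u - b)) + ∫ u in (-t2)..(0:ℝ), (d u - b) := by
    rw [hF' t1 ht1]
    exact (intervalIntegral.integral_add_adjacent_intervals
      (hii0 _ _ hord1 (by linarith)) (hii0 _ _ (by linarith) le_rfl)).symm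
  have e2 : F t2 = (∫ u in (-t2)..(-t3), (d u - b)) + ∫ u in (-t3)..(0:ℝ), (d u - b) := by
    rw [hF' t2 ht2]
    exact (intervalIntegral.integral_add_adjacent_intervals
      (hii0 _ _ hord2 hord3) (hii0 _ _ hord3 le_rfl)).symm
  have e3 : F t3 = ∫ u in (-t3)..(0:ℝ), (d u - b) := hF' t3 ht3
  -- shift the middle integral
  have hshift : (∫ u in (-t2)..(-t3), (d u - b))
      = ∫ u in (-t1)..(-t2), (d (u + δ) - b) := by
    have := intervalIntegral.integral_comp_add_right (a := -t1) (b := -t2)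
      (fun u => d u - b) δ
    have ea : -t1 + δ = -t2 := by simp only [t1, t2]; ring
    have eb : -t2 + δ = -t3 := by simp only [t2, t3]; ring
    rw [ea, eb] at this
    exact this.symm
  have e4 : (∫ u in (-t2)..(0:ℝ), (d u - b))
      = (∫ u in (-t2)..(-t3), (d u - b)) + ∫ u in (-t3)..(0:ℝ), (d u - b) :=
    (intervalIntegral.integral_add_adjacent_intervals
      (hii0 _ _ hord2 hord3) (hii0 _ _ hord3 le_rfl)).symm
  have keyD : F t1 - 2 * F t2 + F t3
      = (∫ u in (-t1)..(-t2), (d u - b)) - ∫ u in (-t1)..(-t2), (d (u + δ) - b) := by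
    rw [e1, e4, e2, e3, hshift]; ring
  -- the two integrands compare pointwise
  have hI1 : IntervalIntegrable (fun u => d u - b) volume (-t1) (-t2) :=
    hii0 _ _ hord1 (by linarith)
  have hI2 : IntervalIntegrable (fun u => d (u + δ) - b) volume (-t1) (-t2) :=
    hii δ _ _ hδ.le hord1 (by simp only [t2, t3] at *; nlinarith)
  have hle : F t1 - 2 * F t2 + F t3 ≤ 0 := by
    rw [keyD]
    refine sub_nonpos.2 (intervalIntegral.integral_mono_on hord1 hI1 hI2 ?_)
    intro x hx
    refine sub_le_sub_right (hd_mono ?_ ?_ (by linarith)) b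
    · simp only [mem_Iic]; linarith [hx.2]
    · simp only [mem_Iic]
      have : x ≤ -t2 := hx.2
      simp only [t2, t3] at *
      nlinarith
  have hlt : StrictMonoOn d (Set.Iic 0) → F t1 - 2 * F t2 + F t3 < 0 := by
    intro hsm
    rw [keyD]
    refine sub_neg.2 ?_
    have hpos : 0 < ∫ u in (-t1)..(-t2), ((d (u + δ) - b) - (d u - b)) := by
      refine intervalIntegral.intervalIntegral_pos_of_pos_on (hI2.sub hI1) ?_ ?_
      · intro x hx
        refine sub_pos.2 (sub_lt_sub_right (hsm ?_ ?_ (by linarith)) b)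
        · simp only [mem_Iic]; linarith [hx.2]
        · simp only [mem_Iic]
          have : x < -t2 := hx.2
          simp only [t2, t3] at *
          nlinarith
      · simp only [t1, t2, neg_lt_neg_iff]; nlinarith
    rw [intervalIntegral.integral_sub hI2 hI1] at hpos
    linarith
  refine ⟨hle, hlt, fun hden => ⟨?_, fun hsm => ?_⟩⟩
  · exact div_nonpos_of_nonpos_of_nonneg hle hden.le
  · exact div_neg_of_neg_of_pos (hlt hsm) hden
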